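/- For every n > 5 there exists a partition of the edges of K_n into sets S, T, Z with |Z| = n − 2 such that ∑_{i=1}^n s_i t_i < min(∑_{i=1}^n z_i t_i, ∑_{i=1}^n z_i s_i), where s_i, t_i, z_i are the degrees of vertex v_i in S, T, Z. Hence the condition |Z| = n − 3 in the incidence bound cannot be relaxed to |Z| = n − 2. -/

import Mathlib

open Finset

set_option maxHeartbeats 1000000 in
theorem sharpness (n : ℕ) (hn : 5 < n) :
    ∃ S T Z : Finset (Sym2 (Fin n)),
      S ∪ T ∪ Z = (⊤ : SimpleGraph (Fin n)).edgeFinset ∧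
      Disjoint S T ∧ Disjoint S Z ∧ Disjoint T Z ∧
      Z.card = n - 2 ∧
      (∑ i, (S.filter (fun e => i ∈ e)).card * (T.filter (fun e => i ∈ e)).card <
        min (∑ i, (Z.filter (fun e => i ∈ e)).card * (T.filter (fun e => i ∈ e)).card)
            (∑ i, (Z.filter (fun e => i ∈ e)).card * (S.filter (fun e => i ∈ e)).card)) := by
  set v0 : Fin n := ⟨0, by omega⟩ with hv0
  set v1 : Fin n := ⟨1, by omega⟩ with hv1
  set v2 : Fin n := ⟨2, by omega⟩ with hv2
  set E01 : Sym2 (Fin n) := Sym2.mk v0 v1 with hE01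
  set E12 : Sym2 (Fin n) := Sym2.mk v1 v2 with hE12
  set E02 : Sym2 (Fin n) := Sym2.mk v0 v2 with hE02
  set M : Finset (Fin n) := univ.filter (fun j => 3 ≤ j.val) with hM
  set S : Finset (Sym2 (Fin n)) := {E01, E12} with hS
  set Z : Finset (Sym2 (Fin n)) := insert E02 (M.image (fun j => Sym2.mk v1 j)) with hZ
  set T : Finset (Sym2 (Fin n)) :=
    (⊤ : SimpleGraph (Fin n)).edgeFinset \ (S ∪ Z) with hT
  -- basic distinctness
  have hE0112 : E01 ≠ E12 := by
    simp [hE01, hE12, Sym2.eq_iff, hv0, hv1, hv2, Fin.ext_iff]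
  have hinj : Set.InjOn (fun j => Sym2.mk v1 j) M := by
    intro a _ b _ hab
    simp only [Sym2.eq_iff] at hab
    rcases hab with ⟨-, h⟩ | ⟨h1, h2⟩
    · exact h
    · rw [← h1, h2]
  have hE02nm : E02 ∉ M.image (fun j => Sym2.mk v1 j) := by
    simp only [mem_image, hM, mem_filter, mem_univ, true_and]
    rintro ⟨j, hj, hje⟩
    rw [hE02, Sym2.eq_iff] at hje
    rcases hje with ⟨h1, -⟩ | ⟨-, h2⟩
    · exact absurd (congrArg Fin.val h1) (by simp [hv0, hv1])
    · simp [h2, hv0] at hj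
  have hMcard : M.card = n - 3 := by
    have hMd : M = univ \ {v0, v1, v2} := by
      ext j
      simp [hM, hv0, hv1, hv2, Fin.ext_iff]
      omega
    rw [hMd, card_sdiff_of_subset (subset_univ _), card_univ, Fintype.card_fin]
    have : ({v0, v1, v2} : Finset (Fin n)).card = 3 := by
      rw [card_insert_of_notMem (by simp [hv0, hv1, hv2, Fin.ext_iff]),
        card_insert_of_notMem (by simp [hv1, hv2, Fin.ext_iff]), card_singleton]
    omega
  have hZcard : Z.card = n - 2 := by
    rw [hZ, card_insert_of_notMem hE02nm, card_image_of_injOn hinj, hMcard]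
    omega
  -- edges are in the complete graph
  have hSZsub : S ∪ Z ⊆ (⊤ : SimpleGraph (Fin n)).edgeFinset := by
    intro e he
    rw [mem_union] at he
    rw [SimpleGraph.mem_edgeFinset]
    rcases he with he | he
    · rw [hS, mem_insert, mem_singleton] at he
      rcases he with rfl | rfl
      · simp [hE01, hv0, hv1, Fin.ext_iff]
      · simp [hE12, hv1, hv2, Fin.ext_iff]
    · rw [hZ, mem_insert, mem_image] at he
      rcases he with rfl | ⟨j, hj, rfl⟩
      · simp [hE02, hv0, hv2, Fin.ext_iff]
      · rw [hM, mem_filter] at hj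
        simp only [SimpleGraph.mem_edgeSet, SimpleGraph.top_adj]
        intro h
        simp [← h, hv1] at hj
  -- disjointness of S and Z
  have hE01Z : E01 ∉ Z := by
    rw [hZ, mem_insert, mem_image]
    rintro (h | ⟨j, hj, hje⟩)
    · rw [hE01, hE02, Sym2.eq_iff] at h
      simp [hv0, hv1, hv2, Fin.ext_iff] at h
    · rw [hM, mem_filter] at hj
      rw [hE01, Sym2.eq_iff] at hje
      rcases hje with ⟨h1, -⟩ | ⟨-, h2⟩
      · exact absurd (congrArg Fin.val h1) (by simp [hv0, hv1])
      · simp [h2, hv0] at hj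
  have hE12Z : E12 ∉ Z := by
    rw [hZ, mem_insert, mem_image]
    rintro (h | ⟨j, hj, hje⟩)
    · rw [hE12, hE02, Sym2.eq_iff] at h
      simp [hv0, hv1, hv2, Fin.ext_iff] at h
    · rw [hM, mem_filter] at hj
      rw [hE12, Sym2.eq_iff] at hje
      rcases hje with ⟨-, h2⟩ | ⟨h1, -⟩
      · simp [h2, hv2] at hj
      · exact absurd (congrArg Fin.val h1) (by simp [hv1, hv2])
  have hSZdisj : Disjoint S Z := by
    rw [hS, disjoint_insert_left, disjoint_singleton_left]
    exact ⟨hE01Z, hE12Z⟩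
  -- degree computations
  have aS : ∀ i : Fin n, (S.filter (fun e => i ∈ e)).card
      = (if i ∈ E01 then 1 else 0) + (if i ∈ E12 then 1 else 0) := by
    intro i
    rw [hS, card_filter]
    rw [show ({E01, E12} : Finset (Sym2 (Fin n))) = insert E01 {E12} from rfl,
      sum_insert (by simpa using hE0112), sum_singleton]
  have aZ : ∀ i : Fin n, (Z.filter (fun e => i ∈ e)).card
      = (if i ∈ E02 then 1 else 0)
        + ∑ j ∈ M, (if i = v1 ∨ i = j then 1 else 0) := by
    intro i
    rw [hZ, card_filter, sum_insert hE02nm, sum_image hinj]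
    simp [Sym2.mem_iff]
  have aE : ∀ i : Fin n,
      (((⊤ : SimpleGraph (Fin n)).edgeFinset).filter (fun e => i ∈ e)).card = n - 1 := by
    intro i
    rw [← SimpleGraph.incidenceFinset_eq_filter, SimpleGraph.card_incidenceFinset_eq_degree,
      SimpleGraph.complete_graph_degree, Fintype.card_fin]
  have aT : ∀ i : Fin n, (T.filter (fun e => i ∈ e)).card
      = (n - 1) - ((S.filter (fun e => i ∈ e)).card + (Z.filter (fun e => i ∈ e)).card) := by
    intro i
    have hfe : T.filter (fun e => i ∈ e)
        = (((⊤ : SimpleGraph (Fin n)).edgeFinset).filter (fun e => i ∈ e))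
          \ ((S ∪ Z).filter (fun e => i ∈ e)) := by
      ext e
      simp only [hT, mem_filter, mem_sdiff]
      tauto
    rw [hfe, card_sdiff_of_subset (filter_subset_filter _ hSZsub), aE, filter_union,
      card_union_of_disjoint (disjoint_filter_filter hSZdisj)]
  -- per-vertex values
  have aS0 : (S.filter (fun e => v0 ∈ e)).card = 1 := by
    rw [aS]
    simp [hE01, hE12, Sym2.mem_iff, hv0, hv1, hv2, Fin.ext_iff]
  have aS1 : (S.filter (fun e => v1 ∈ e)).card = 2 := by
    rw [aS]
    simp [hE01, hE12, Sym2.mem_iff, hv0, hv1, hv2, Fin.ext_iff]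
  have aS2 : (S.filter (fun e => v2 ∈ e)).card = 1 := by
    rw [aS]
    simp [hE01, hE12, Sym2.mem_iff, hv0, hv1, hv2, Fin.ext_iff]
  have aSi : ∀ i : Fin n, 3 ≤ i.val → (S.filter (fun e => i ∈ e)).card = 0 := by
    intro i hi
    rw [aS]
    have h1 : i ∉ E01 := by
      simp only [hE01, Sym2.mem_iff, hv0, hv1, Fin.ext_iff]
      push_neg
      constructor <;> simp <;> omega
    have h2 : i ∉ E12 := by
      simp only [hE12, Sym2.mem_iff, hv1, hv2, Fin.ext_iff]
      push_neg
      constructor <;> simp <;> omega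
    rw [if_neg h1, if_neg h2]
  have aZ0 : (Z.filter (fun e => v0 ∈ e)).card = 1 := by
    rw [aZ]
    have h1 : (if v0 ∈ E02 then 1 else 0) = 1 := by
      simp [hE02, Sym2.mem_iff]
    have h2 : ∑ j ∈ M, (if v0 = v1 ∨ v0 = j then 1 else 0) = 0 := by
      apply sum_eq_zero
      intro j hj
      rw [hM, mem_filter] at hj
      rw [if_neg]
      rintro (h | h)
      · exact absurd (congrArg Fin.val h) (by simp [hv0, hv1])
      · simp [← h, hv0] at hj
    rw [h1, h2]
  have aZ1 : (Z.filter (fun e => v1 ∈ e)).card = n - 3 := by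
    rw [aZ]
    have h1 : (if v1 ∈ E02 then 1 else 0) = 0 := by
      rw [if_neg]
      simp [hE02, Sym2.mem_iff, hv0, hv1, hv2, Fin.ext_iff]
    have h2 : ∑ j ∈ M, (if v1 = v1 ∨ v1 = j then 1 else 0) = n - 3 := by
      rw [sum_congr rfl (fun j _ => if_pos (Or.inl rfl)), sum_const, smul_eq_mul, mul_one,
        hMcard]
    rw [h1, h2]
    omega
  have aZ2 : (Z.filter (fun e => v2 ∈ e)).card = 1 := by
    rw [aZ]
    have h1 : (if v2 ∈ E02 then 1 else 0) = 1 := by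
      simp [hE02, Sym2.mem_iff]
    have h2 : ∑ j ∈ M, (if v2 = v1 ∨ v2 = j then 1 else 0) = 0 := by
      apply sum_eq_zero
      intro j hj
      rw [hM, mem_filter] at hj
      rw [if_neg]
      rintro (h | h)
      · exact absurd (congrArg Fin.val h) (by simp [hv1, hv2])
      · simp [← h, hv2] at hj
    rw [h1, h2]
  have aZi : ∀ i : Fin n, 3 ≤ i.val → (Z.filter (fun e => i ∈ e)).card = 1 := by
    intro i hi
    rw [aZ]
    have h1 : (if i ∈ E02 then 1 else 0) = 0 := by
      rw [if_neg]
      simp only [hE02, Sym2.mem_iff, hv0, hv2, Fin.ext_iff]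
      push_neg
      constructor <;> simp <;> omega
    have h2 : ∑ j ∈ M, (if i = v1 ∨ i = j then 1 else 0) = 1 := by
      have hrw : ∀ j ∈ M, (if i = v1 ∨ i = j then 1 else 0) = (if i = j then 1 else 0) := by
        intro j _
        have : ¬ i = v1 := by
          intro h
          rw [h, hv1] at hi
          simp at hi
        by_cases hij : i = j <;> simp [hij, this]
      rw [sum_congr rfl hrw, sum_ite_eq M i (fun _ => 1), if_pos]
      rw [hM, mem_filter]
      exact ⟨mem_univ i, hi⟩
    rw [h1, h2]
  -- T values
  have aT0 : (T.filter (fun e => v0 ∈ e)).card = n - 3 := by rw [aT, aS0, aZ0]; omega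
  have aT1 : (T.filter (fun e => v1 ∈ e)).card = 0 := by rw [aT, aS1, aZ1]; omega
  have aT2 : (T.filter (fun e => v2 ∈ e)).card = n - 3 := by rw [aT, aS2, aZ2]; omega
  have aTi : ∀ i : Fin n, 3 ≤ i.val → (T.filter (fun e => i ∈ e)).card = n - 2 := by
    intro i hi
    rw [aT, aSi i hi, aZi i hi]
    omega
  -- splitting the sums
  set K : Finset (Fin n) := {v0, v1, v2} with hK
  have hKc : ∀ i ∈ Kᶜ, 3 ≤ i.val := by
    intro i hi
    simp only [hK, mem_compl, mem_insert, mem_singleton, hv0, hv1, hv2, Fin.ext_iff] at hi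
    push_neg at hi
    simp at hi
    omega
  have hKcard : K.card = 3 := by
    rw [hK, card_insert_of_notMem (by simp [hv0, hv1, hv2, Fin.ext_iff]),
      card_insert_of_notMem (by simp [hv1, hv2, Fin.ext_iff]), card_singleton]
  have hKccard : Kᶜ.card = n - 3 := by
    rw [card_compl, hKcard, Fintype.card_fin]
  have split : ∀ f : Fin n → ℕ,
      ∑ i, f i = (f v0 + (f v1 + f v2)) + ∑ i ∈ Kᶜ, f i := by
    intro f
    rw [← Finset.sum_add_sum_compl K f]
    congr 1
  -- the three sums
  have hST : ∑ i, (S.filter (fun e => i ∈ e)).card * (T.filter (fun e => i ∈ e)).card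
      = 2 * (n - 3) := by
    rw [split, aS0, aT0, aS1, aT1, aS2, aT2]
    have h0 : ∑ i ∈ Kᶜ, (S.filter (fun e => i ∈ e)).card * (T.filter (fun e => i ∈ e)).card
        = 0 := sum_eq_zero (fun i hi => by rw [aSi i (hKc i hi), zero_mul])
    rw [h0]
    ring
  have hZT : ∑ i, (Z.filter (fun e => i ∈ e)).card * (T.filter (fun e => i ∈ e)).card
      = 2 * (n - 3) + (n - 3) * (n - 2) := by
    rw [split, aZ0, aT0, aZ1, aT1, aZ2, aT2]
    have h0 : ∑ i ∈ Kᶜ, (Z.filter (fun e => i ∈ e)).card * (T.filter (fun e => i ∈ e)).card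
        = (n - 3) * (n - 2) := by
      rw [sum_congr rfl (fun i hi => by rw [aZi i (hKc i hi), aTi i (hKc i hi)]),
        sum_const, hKccard, smul_eq_mul]
      ring
    rw [h0]
    ring
  have hZS : ∑ i, (Z.filter (fun e => i ∈ e)).card * (S.filter (fun e => i ∈ e)).card
      = 2 * (n - 3) + 2 := by
    rw [split, aZ0, aS0, aZ1, aS1, aZ2, aS2]
    have h0 : ∑ i ∈ Kᶜ, (Z.filter (fun e => i ∈ e)).card * (S.filter (fun e => i ∈ e)).card
        = 0 := sum_eq_zero (fun i hi => by rw [aSi i (hKc i hi), mul_zero])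
    rw [h0]
    ring
  -- assemble
  refine ⟨S, T, Z, ?_, ?_, hSZdisj, ?_, hZcard, ?_⟩
  · rw [union_right_comm, hT, union_sdiff_of_subset hSZsub]
  · have hd : Disjoint T (S ∪ Z) := by rw [hT]; exact sdiff_disjoint
    exact (hd.mono_right subset_union_left).symm
  · have hd : Disjoint T (S ∪ Z) := by rw [hT]; exact sdiff_disjoint
    exact hd.mono_right subset_union_right
  · rw [hST, hZT, hZS, lt_min_iff]
    have hp : 0 < (n - 3) * (n - 2) := Nat.mul_pos (by omega) (by omega)
    exact ⟨Nat.lt_add_of_pos_right hp, by omega⟩
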